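/- Let G be a k-uniform hypergraph on n vertices (with 2 ≤ k ≤ n) that has at least one edge and is not the complete k-uniform hypergraph K_n^k. Then EE(K̄_n^k) < EE(G) < EE(K_n^k), where K̄_n^k is the edgeless hypergraph on n vertices and K_n^k is the complete k-uniform hypergraph on n vertices (whose edges are all k-element subsets of the vertex set). -/

import Mathlib

open scoped BigOperators

set_option linter.unusedSectionVars false

section Hyper

variable {V : Type*} [Fintype V] [DecidableEq V]

/-- The adjacency matrix of a hypergraph given by its edge set `E`:
the `(i,j)` entry, for `i ≠ j`, is the number of edges containing both `i` and `j`,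
and the diagonal entries are `0`. -/
def adjMatrix (E : Finset (Finset V)) : Matrix V V ℝ :=
  fun i j => if i = j then 0 else ((E.filter fun e => i ∈ e ∧ j ∈ e).card : ℝ)

theorem adjMatrix_isHermitian (E : Finset (Finset V)) :
    (adjMatrix E).IsHermitian := by
  unfold Matrix.IsHermitian
  ext i j
  simp only [Matrix.conjTranspose_apply, adjMatrix, star_trivial]
  rcases eq_or_ne i j with h | h
  · simp [h]
  · have hfilter : E.filter (fun e => j ∈ e ∧ i ∈ e) = E.filter (fun e => i ∈ e ∧ j ∈ e) :=
      Finset.filter_congr fun e _ => and_comm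
    rw [if_neg (Ne.symm h), if_neg h, hfilter]

/-- The Estrada index of a hypergraph: `EE(G) = ∑ᵢ exp (λᵢ)`, the sum over the
eigenvalues (with multiplicity) of the adjacency matrix; equivalently `tr (exp A(G))`. -/
noncomputable def estradaIndex (E : Finset (Finset V)) : ℝ :=
  ∑ i, Real.exp ((adjMatrix_isHermitian E).eigenvalues i)

/-- The energy of a hypergraph: `∑ᵢ |λᵢ|` over the adjacency eigenvalues. -/
noncomputable def energy (E : Finset (Finset V)) : ℝ :=
  ∑ i, |(adjMatrix_isHermitian E).eigenvalues i|

/-- The degree of a vertex: the number of edges containing it. -/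
def degree (E : Finset (Finset V)) (v : V) : ℕ := (E.filter fun e => v ∈ e).card

end Hyper

section Aux

variable {V : Type*} [Fintype V] [DecidableEq V]

theorem trace_pow_eq (A : Matrix V V ℝ) (hA : A.IsHermitian) (m : ℕ) :
    (A ^ m).trace = ∑ i, hA.eigenvalues i ^ m := by
  set U : Matrix V V ℝ := (hA.eigenvectorUnitary : Matrix V V ℝ) with hUdef
  set D : Matrix V V ℝ := Matrix.diagonal (RCLike.ofReal ∘ hA.eigenvalues) with hDdef
  have hU : star U * U = 1 := Unitary.coe_star_mul_self _
  have hU2 : U * star U = 1 := Unitary.coe_mul_star_self _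
  have h2 : star U * A = D * star U := by
    calc star U * A = star U * A * (U * star U) := by rw [hU2, Matrix.mul_one]
    _ = (star U * A * U) * star U := by rw [Matrix.mul_assoc (star U * A)]
    _ = D * star U := by
      have h := hA.conjStarAlgAut_star_eigenvectorUnitary
      simp only [Unitary.conjStarAlgAut_apply, Unitary.coe_star, star_star] at h
      rw [h]
  have key : A ^ m = U * D ^ m * star U := by
    induction m with
    | zero => simp [Matrix.mul_assoc, hU2]
    | succ m ih =>
      rw [pow_succ, ih, Matrix.mul_assoc, Matrix.mul_assoc, h2]
      simp only [← Matrix.mul_assoc, pow_succ]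
  rw [key, Matrix.trace_mul_cycle, hU, Matrix.one_mul,
    hDdef, Matrix.diagonal_pow, Matrix.trace_diagonal]
  simp [Pi.pow_apply]

theorem adj_nonneg (E : Finset (Finset V)) (i j : V) : 0 ≤ adjMatrix E i j := by
  unfold adjMatrix; split <;> positivity

theorem adj_symm (E : Finset (Finset V)) (i j : V) : adjMatrix E j i = adjMatrix E i j :=
  congrFun (congrFun (adjMatrix_isHermitian E) j) i |>.symm ▸ rfl

theorem pow_entry_le {A B : Matrix V V ℝ} (hA0 : ∀ i j, 0 ≤ A i j)
    (hle : ∀ i j, A i j ≤ B i j) (m : ℕ) (i j : V) :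
    0 ≤ (A ^ m) i j ∧ (A ^ m) i j ≤ (B ^ m) i j := by
  induction m generalizing i j with
  | zero =>
    simp only [pow_zero, Matrix.one_apply]
    split <;> simp
  | succ m ih =>
    simp only [pow_succ, Matrix.mul_apply]
    constructor
    · exact Finset.sum_nonneg fun k _ => mul_nonneg (ih i k).1 (hA0 k j)
    · exact Finset.sum_le_sum fun k _ => mul_le_mul (ih i k).2 (hle k j) (hA0 k j)
        ((ih i k).1.trans (ih i k).2)

theorem estrada_eq_tsum (E : Finset (Finset V)) :
    estradaIndex E = ∑' m : ℕ, (adjMatrix E ^ m).trace / m.factorial := by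
  unfold estradaIndex
  have h1 : ∀ x : ℝ, Real.exp x = ∑' m : ℕ, x ^ m / m.factorial := by
    intro x
    rw [Real.exp_eq_exp_ℝ, NormedSpace.exp_eq_tsum_div]
  simp_rw [h1]
  rw [← Summable.tsum_finsetSum (fun i _ => Real.summable_pow_div_factorial _)]
  congr 1
  funext m
  rw [trace_pow_eq _ (adjMatrix_isHermitian E), Finset.sum_div]

theorem summable_trace (E : Finset (Finset V)) :
    Summable fun m : ℕ => (adjMatrix E ^ m).trace / m.factorial := by
  have : (fun m : ℕ => (adjMatrix E ^ m).trace / m.factorial) =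
      fun m : ℕ => ∑ i, (adjMatrix_isHermitian E).eigenvalues i ^ m / m.factorial := by
    funext m
    rw [trace_pow_eq _ (adjMatrix_isHermitian E), Finset.sum_div]
  rw [this]
  exact summable_sum fun i _ => Real.summable_pow_div_factorial _

theorem estrada_lt (E₁ E₂ : Finset (Finset V))
    (hle : ∀ i j, adjMatrix E₁ i j ≤ adjMatrix E₂ i j)
    (i₀ j₀ : V) (hij : adjMatrix E₁ i₀ j₀ < adjMatrix E₂ i₀ j₀) :
    estradaIndex E₁ < estradaIndex E₂ := by
  rw [estrada_eq_tsum, estrada_eq_tsum]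
  have hA0 := adj_nonneg E₁
  have hB0 := adj_nonneg E₂
  refine Summable.tsum_lt_tsum_of_nonneg (i := 2) ?_ ?_ ?_ (summable_trace E₂)
  · intro m
    apply div_nonneg _ (by positivity)
    exact Finset.sum_nonneg fun i _ => (pow_entry_le hA0 hle m i i).1
  · intro m
    have : (adjMatrix E₁ ^ m).trace ≤ (adjMatrix E₂ ^ m).trace := by
      unfold Matrix.trace Matrix.diag
      exact Finset.sum_le_sum fun i _ => (pow_entry_le hA0 hle m i i).2
    gcongr
  · have h2 : (adjMatrix E₁ ^ 2).trace < (adjMatrix E₂ ^ 2).trace := by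
      simp only [Matrix.trace, Matrix.diag, pow_two, Matrix.mul_apply]
      refine Finset.sum_lt_sum (fun i _ => Finset.sum_le_sum fun j _ =>
        mul_le_mul (hle i j) (hle j i) (hA0 j i) ((hA0 i j).trans (hle i j)))
        ⟨i₀, Finset.mem_univ _, Finset.sum_lt_sum (fun j _ =>
          mul_le_mul (hle i₀ j) (hle j i₀) (hA0 j i₀) ((hA0 i₀ j).trans (hle i₀ j)))
          ⟨j₀, Finset.mem_univ _, ?_⟩⟩
      rw [adj_symm E₁ i₀ j₀, adj_symm E₂ i₀ j₀]
      exact mul_self_lt_mul_self (hA0 i₀ j₀) hij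
    gcongr

end Aux

/-- For a `k`-uniform hypergraph `G` on `n` vertices with at least one edge and not
complete, `EE(K̄ₙᵏ) < EE(G) < EE(Kₙᵏ)`, where `K̄ₙᵏ` is the edgeless hypergraph and
`Kₙᵏ` the complete `k`-uniform hypergraph. -/
theorem stmt_11 (n k : ℕ) (hk2 : 2 ≤ k) (hkn : k ≤ n)
    (E : Finset (Finset (Fin n))) (hunif : ∀ e ∈ E, e.card = k)
    (hne : E.Nonempty)
    (hncomp : E ≠ Finset.powersetCard k (Finset.univ : Finset (Fin n))) :
    estradaIndex (∅ : Finset (Finset (Fin n))) < estradaIndex E ∧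
      estradaIndex E <
        estradaIndex (Finset.powersetCard k (Finset.univ : Finset (Fin n))) := by
  have hadj0 : ∀ i j : Fin n, adjMatrix (∅ : Finset (Finset (Fin n))) i j = 0 := by
    intro i j; unfold adjMatrix; split <;> simp
  constructor
  · obtain ⟨e, he⟩ := hne
    have hk : 1 < e.card := by rw [hunif e he]; omega
    obtain ⟨a, ha, b, hb, hab⟩ := Finset.one_lt_card.mp hk
    refine estrada_lt _ _ (fun i j => ?_) a b ?_
    · rw [hadj0]; exact adj_nonneg E i j
    · rw [hadj0]
      unfold adjMatrix
      rw [if_neg hab]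
      have hmem : e ∈ E.filter fun f => a ∈ f ∧ b ∈ f :=
        Finset.mem_filter.mpr ⟨he, ha, hb⟩
      exact_mod_cast Finset.card_pos.mpr ⟨e, hmem⟩
  · set K := Finset.powersetCard k (Finset.univ : Finset (Fin n)) with hK
    have hsub : E ⊆ K := fun e he =>
      Finset.mem_powersetCard.mpr ⟨Finset.subset_univ _, hunif e he⟩
    obtain ⟨e, heK, heE⟩ := Finset.exists_of_ssubset (hsub.ssubset_of_ne hncomp)
    have hcard : e.card = k := (Finset.mem_powersetCard.mp heK).2
    have hk : 1 < e.card := by rw [hcard]; omega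
    obtain ⟨a, ha, b, hb, hab⟩ := Finset.one_lt_card.mp hk
    refine estrada_lt _ _ (fun i j => ?_) a b ?_
    · unfold adjMatrix
      split
      · exact le_refl _
      · exact_mod_cast Finset.card_le_card (Finset.filter_subset_filter _ hsub)
    · unfold adjMatrix
      rw [if_neg hab, if_neg hab]
      have hss : (E.filter fun f => a ∈ f ∧ b ∈ f) ⊂ (K.filter fun f => a ∈ f ∧ b ∈ f) := by
        refine ⟨Finset.filter_subset_filter _ hsub, fun h => heE ?_⟩
        have : e ∈ E.filter fun f => a ∈ f ∧ b ∈ f :=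
          h (Finset.mem_filter.mpr ⟨heK, ha, hb⟩)
        exact (Finset.mem_filter.mp this).1
      exact_mod_cast Finset.card_lt_card hss
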